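/- Let H be an r-uniform hypergraph, let C = v_1, e_1, v_2, …, v_c, e_c, v_1 be a Berge cycle of maximum length in H, let u ∈ V(H) − V(C), let B = {e_j ∈ E(C) : u ∈ e_j} with b = |B|, and let W be a (u,C)-expanding set. Then: (i) if the edges of B form exactly q maximal runs of consecutive edges along the cyclic order of C, then |W| ≤ c − (b + q) + 2; (ii) if the vertices of W form exactly q' maximal runs of consecutive vertices along the cyclic order of C, then b ≤ c − (|W| + q') + 2. -/

import Mathlib

/-- A hypergraph on vertex type `α`: a finite vertex set together with a family of
distinct subsets of it, called edges. -/
structure BHypergraph (α : Type*) [DecidableEq α] where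
  verts : Finset α
  edges : Finset (Finset α)
  edge_sub : ∀ e ∈ edges, e ⊆ verts

/-- A simple graph is 2-connected if it has at least 3 vertices, is connected, and
remains connected after deleting any single vertex. -/
def IsTwoConnectedGraph {V : Type*} (G : SimpleGraph V) : Prop :=
  3 ≤ Nat.card V ∧ G.Connected ∧
    ∀ x : V, ((⊤ : G.Subgraph).deleteVerts {x}).coe.Connected

namespace BHypergraph

variable {α : Type*} [DecidableEq α]

/-- `H` is `r`-uniform: each edge has exactly `r` vertices. -/
def Uniform (H : BHypergraph α) (r : ℕ) : Prop := ∀ e ∈ H.edges, e.card = r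

/-- The degree of a vertex: the number of edges containing it. -/
def degree (H : BHypergraph α) (v : α) : ℕ := (H.edges.filter (fun e => v ∈ e)).card

/-- The minimum degree of `H` is at least `k`. -/
def MinDegreeGE (H : BHypergraph α) (k : ℕ) : Prop := ∀ v ∈ H.verts, k ≤ H.degree v

/-- The vertex type of the incidence graph of `H`: vertices of `H` together with
edges of `H`. -/
def IncVert (H : BHypergraph α) : Type _ :=
  {x : α ⊕ Finset α // Sum.elim (fun v => v ∈ H.verts) (fun e => e ∈ H.edges) x}

/-- The incidence (bipartite) graph of `H`: `v ∈ V(H)` is adjacent to `e ∈ E(H)`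
iff `v ∈ e`. -/
def incidenceGraph (H : BHypergraph α) : SimpleGraph (IncVert H) where
  Adj x y := (∃ v e, x.1 = Sum.inl v ∧ y.1 = Sum.inr e ∧ v ∈ e) ∨
             (∃ v e, y.1 = Sum.inl v ∧ x.1 = Sum.inr e ∧ v ∈ e)
  symm := ⟨fun _ _ h => h.elim Or.inr Or.inl⟩
  loopless := ⟨by
    rintro x (⟨v, e, h1, h2, _⟩ | ⟨v, e, h1, h2, _⟩) <;> rw [h1] at h2 <;> simp at h2⟩

/-- `H` is 2-connected iff its incidence graph is a 2-connected graph. -/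
def TwoConnected (H : BHypergraph α) : Prop := IsTwoConnectedGraph H.incidenceGraph

/-- `H` contains a Berge cycle of length `c`: `c` distinct vertices `v_1, …, v_c` and
`c` distinct edges `e_1, …, e_c` with `{v_i, v_{i+1}} ⊆ e_i` (indices mod `c`). -/
def HasBergeCycle (H : BHypergraph α) (c : ℕ) : Prop :=
  2 ≤ c ∧ ∃ (v : ZMod c → α) (e : ZMod c → Finset α),
    Function.Injective v ∧ Function.Injective e ∧
    (∀ i, e i ∈ H.edges) ∧ (∀ i, v i ∈ e i) ∧ (∀ i, v (i + 1) ∈ e i)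

end BHypergraph

open BHypergraph

variable {α : Type*} [DecidableEq α]

/-- A Berge cycle of length `c` in `H`, with defining vertices `v i` and edges `e i`
indexed cyclically by `ZMod c`; edge `e i` contains `v i` and `v (i+1)`. -/
structure BergeCycle (H : BHypergraph α) (c : ℕ) where
  hc : 2 ≤ c
  v : ZMod c → α
  e : ZMod c → Finset α
  v_inj : Function.Injective v
  e_inj : Function.Injective e
  e_mem : ∀ i, e i ∈ H.edges
  mem_self : ∀ i, v i ∈ e i
  mem_succ : ∀ i, v (i + 1) ∈ e i

/-- The set of defining vertices of a Berge cycle. -/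
def BergeCycle.vset {H : BHypergraph α} {c : ℕ} (C : BergeCycle H c) : Finset α :=
  letI : NeZero c := ⟨by have h := C.hc; omega⟩
  Finset.image C.v Finset.univ

/-- The set of edges of a Berge cycle. -/
def BergeCycle.eset {H : BHypergraph α} {c : ℕ} (C : BergeCycle H c) : Finset (Finset α) :=
  letI : NeZero c := ⟨by have h := C.hc; omega⟩
  Finset.image C.e Finset.univ

/-- A Berge path `u 0, f 0, u 1, …, f (ℓ-1), u ℓ` in `H` with `ℓ` edges:
distinct vertices, distinct edges, and `{u i, u (i+1)} ⊆ f i`. -/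
structure BergePath (H : BHypergraph α) (ℓ : ℕ) where
  u : Fin (ℓ + 1) → α
  f : Fin ℓ → Finset α
  u_inj : Function.Injective u
  f_inj : Function.Injective f
  u_mem : ∀ i, u i ∈ H.verts
  f_mem : ∀ i, f i ∈ H.edges
  mem_cast : ∀ i : Fin ℓ, u i.castSucc ∈ f i
  mem_succ : ∀ i : Fin ℓ, u i.succ ∈ f i

def BergePath.vset {H : BHypergraph α} {ℓ : ℕ} (P : BergePath H ℓ) : Finset α :=
  Finset.image P.u Finset.univ

def BergePath.eset {H : BHypergraph α} {ℓ : ℕ} (P : BergePath H ℓ) : Finset (Finset α) :=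
  Finset.image P.f Finset.univ

/-- A partial Berge path `f_0, u_1, f_1, …, f_(ℓ-1), u_ℓ`, beginning with an edge:
here `u i` denotes the vertex `u_(i+1)` and `f i` denotes the edge `f_i`, so that
`u_1 ∈ f_0` and `{u_i, u_(i+1)} ⊆ f_i` for `1 ≤ i ≤ ℓ-1`. -/
structure PartialBergePath (H : BHypergraph α) (ℓ : ℕ) where
  u : Fin ℓ → α
  f : Fin ℓ → Finset α
  u_inj : Function.Injective u
  f_inj : Function.Injective f
  u_mem : ∀ i, u i ∈ H.verts
  f_mem : ∀ i, f i ∈ H.edges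
  mem_self : ∀ i : Fin ℓ, u i ∈ f i
  mem_next : ∀ (i : ℕ) (h : i + 1 < ℓ), u ⟨i, by omega⟩ ∈ f ⟨i + 1, h⟩

def PartialBergePath.vset {H : BHypergraph α} {ℓ : ℕ} (P : PartialBergePath H ℓ) : Finset α :=
  Finset.image P.u Finset.univ

def PartialBergePath.eset {H : BHypergraph α} {ℓ : ℕ} (P : PartialBergePath H ℓ) :
    Finset (Finset α) :=
  Finset.image P.f Finset.univ

/-- An ordinary lollipop (o-lollipop): a Berge cycle `C` together with a Berge path `P`
starting at a vertex of `C`, with `|V(C) ∩ V(P)| = 1` and `E(C) ∩ E(P) = ∅`. -/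
structure OLollipop (H : BHypergraph α) (c ℓ : ℕ) where
  C : BergeCycle H c
  P : BergePath H ℓ
  start_mem : P.u 0 ∈ C.vset
  inter_v : C.vset ∩ P.vset = {P.u 0}
  inter_e : C.eset ∩ P.eset = ∅

/-- A partial lollipop (p-lollipop): a Berge cycle `C` together with a partial Berge
path `P` whose first edge is an edge of `C`, with `V(C) ∩ V(P) = ∅` and
`E(C) ∩ E(P) = {f_0}`. -/
structure PLollipop (H : BHypergraph α) (c ℓ : ℕ) where
  hl : 1 ≤ ℓ
  C : BergeCycle H c
  P : PartialBergePath H ℓ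
  first_edge : P.f ⟨0, hl⟩ ∈ C.eset
  inter_v : C.vset ∩ P.vset = ∅
  inter_e : C.eset ∩ P.eset = {P.f ⟨0, hl⟩}

/-- A lollipop of `H` is either an o-lollipop or a p-lollipop. -/
inductive Lollipop (H : BHypergraph α) : Type _ where
  | o : (c ℓ : ℕ) → OLollipop H c ℓ → Lollipop H
  | p : (c ℓ : ℕ) → PLollipop H c ℓ → Lollipop H

namespace Lollipop

variable {H : BHypergraph α}

/-- The set of defining vertices of the cycle of a lollipop. -/
def cycVset : Lollipop H → Finset α
  | .o _ _ L => L.C.vset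
  | .p _ _ L => L.C.vset

/-- The set of edges of the cycle of a lollipop. -/
def cycEset : Lollipop H → Finset (Finset α)
  | .o _ _ L => L.C.eset
  | .p _ _ L => L.C.eset

/-- The set of vertices of the path of a lollipop. -/
def pathVset : Lollipop H → Finset α
  | .o _ _ L => L.P.vset
  | .p _ _ L => L.P.vset

/-- The set of edges of the path of a lollipop. -/
def pathEset : Lollipop H → Finset (Finset α)
  | .o _ _ L => L.P.eset
  | .p _ _ L => L.P.eset

/-- `|V(P) − V(C)|`. -/
def pGain (L : Lollipop H) : ℕ := (L.pathVset \ L.cycVset).card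

/-- The number of incidences between vertices of `V(P) − V(C)` and edges of
`E(C) − E(P)`, counted with multiplicity. -/
def incCount (L : Lollipop H) : ℕ :=
  ∑ e ∈ (L.cycEset \ L.pathEset), (e ∩ (L.pathVset \ L.cycVset)).card

/-- The number of edges of `E(P) − E(C)` entirely contained in `V(P) − V(C)`. -/
def contCount (L : Lollipop H) : ℕ :=
  ((L.pathEset \ L.cycEset).filter (fun e => e ⊆ L.pathVset \ L.cycVset)).card

/-- 1-good: the cycle is as long as possible among all lollipops. -/
def Good1 (L : Lollipop H) : Prop := ∀ L' : Lollipop H, L'.cycVset.card ≤ L.cycVset.card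

/-- 2-good: lexicographically maximizes `(|V(C)|, |V(P)−V(C)|)`. -/
def Good2 (L : Lollipop H) : Prop :=
  L.Good1 ∧ ∀ L' : Lollipop H, L'.cycVset.card = L.cycVset.card → L'.pGain ≤ L.pGain

/-- 3-good. -/
def Good3 (L : Lollipop H) : Prop :=
  L.Good2 ∧ ∀ L' : Lollipop H, L'.cycVset.card = L.cycVset.card → L'.pGain = L.pGain →
    L'.incCount ≤ L.incCount

/-- 4-good (best). -/
def Good4 (L : Lollipop H) : Prop :=
  L.Good3 ∧ ∀ L' : Lollipop H, L'.cycVset.card = L.cycVset.card → L'.pGain = L.pGain →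
    L'.incCount = L.incCount → L'.contCount ≤ L.contCount

end Lollipop

/-- A disjoint cycle-path pair (dcp-pair): a Berge cycle and a Berge path having no
common edges and such that no defining vertex of the cycle is a vertex of the path. -/
structure DcpPair (H : BHypergraph α) where
  c : ℕ
  l : ℕ
  C : BergeCycle H c
  P : BergePath H l
  disj_v : Disjoint C.vset P.vset
  disj_e : Disjoint C.eset P.eset

namespace DcpPair

variable {H : BHypergraph α}

/-- The number of incidences between vertices of `V(P)` and edges of `E(C)`,
counted with multiplicity. -/
def incCount (D : DcpPair H) : ℕ := ∑ e ∈ D.C.eset, (e ∩ D.P.vset).card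

/-- The number of edges of `E(P)` entirely contained in `V(P)`. -/
def contCount (D : DcpPair H) : ℕ := (D.P.eset.filter (fun e => e ⊆ D.P.vset)).card

/-- 1-good dcp-pair. -/
def Good1 (D : DcpPair H) : Prop := ∀ D' : DcpPair H, D'.C.vset.card ≤ D.C.vset.card

/-- 2-good dcp-pair: lexicographically maximizes `(|V(C)|, |V(P)|)`. -/
def Good2 (D : DcpPair H) : Prop :=
  D.Good1 ∧ ∀ D' : DcpPair H, D'.C.vset.card = D.C.vset.card →
    D'.P.vset.card ≤ D.P.vset.card

/-- 3-good dcp-pair. -/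
def Good3 (D : DcpPair H) : Prop :=
  D.Good2 ∧ ∀ D' : DcpPair H, D'.C.vset.card = D.C.vset.card →
    D'.P.vset.card = D.P.vset.card → D'.incCount ≤ D.incCount

/-- 4-good dcp-pair. -/
def Good4 (D : DcpPair H) : Prop :=
  D.Good3 ∧ ∀ D' : DcpPair H, D'.C.vset.card = D.C.vset.card →
    D'.P.vset.card = D.P.vset.card → D'.incCount = D.incCount →
    D'.contCount ≤ D.contCount

end DcpPair

/-- The `E'`-neighborhood of a vertex `x`: all vertices `w` such that some edge of `E'`
contains both `x` and `w`. -/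
def nbhd (E' : Finset (Finset α)) (x : α) : Finset α :=
  (E'.filter (fun e => x ∈ e)).biUnion id

/-- `W ⊆ V(C)` is `(u,C)`-expanding: for every two distinct vertices `x, y ∈ W` there is
a Berge path `R` from `x` to `y` whose internal vertices avoid `V(C) ∪ {u}` and all of
whose edges lie in `E(H) − E(C)`. -/
def IsExpanding {α : Type*} [DecidableEq α] {H : BHypergraph α} {c : ℕ}
    (C : BergeCycle H c) (u : α) (W : Finset α) : Prop :=
  W ⊆ C.vset ∧ ∀ x ∈ W, ∀ y ∈ W, x ≠ y →
    ∃ (ℓ : ℕ) (R : BergePath H ℓ),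
      R.u 0 = x ∧ R.u (Fin.last ℓ) = y ∧
      (∀ t : Fin (ℓ + 1), t ≠ 0 → t ≠ Fin.last ℓ → R.u t ∉ C.vset ∧ R.u t ≠ u) ∧
      (∀ t : Fin ℓ, R.f t ∉ C.eset)


namespace S19
open Finset

lemma zmod_cast_inj {c : ℕ} [NeZero c] {a b : ℕ} (ha : a < c) (hb : b < c)
    (h : (a : ZMod c) = (b : ZMod c)) : a = b := by
  have := congrArg ZMod.val h
  rwa [ZMod.val_cast_of_lt ha, ZMod.val_cast_of_lt hb] at this

lemma shift_card {c : ℕ} [NeZero c] (P : ZMod c → Prop) [DecidablePred P] :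
    (Finset.univ.filter fun x => P (x + 1)).card = (Finset.univ.filter P).card := by
  apply Finset.card_bij (fun x _ => x + 1)
  · intro a ha; simp only [mem_filter, mem_univ, true_and] at ha ⊢; exact ha
  · intro a _ b _ h; exact add_right_cancel h
  · intro b hb
    refine ⟨b - 1, ?_, by ring⟩
    simp only [mem_filter, mem_univ, true_and, sub_add_cancel] at hb ⊢
    exact hb

lemma count_lemma {c : ℕ} [NeZero c] (p s : ZMod c → Prop) [DecidablePred p] [DecidablePred s]
    (h1 : (Finset.univ.filter fun x => p x ∧ s x).card ≤ 1)
    (h2 : (Finset.univ.filter fun x => p x ∧ s (x + 1)).card ≤ 1) :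
    (Finset.univ.filter p).card + (Finset.univ.filter s).card
      + (Finset.univ.filter fun x => s x ∧ ¬ s (x - 1)).card ≤ c + 2 := by
  classical
  have hsplit1 : (Finset.univ.filter s).card
      + (Finset.univ.filter fun x => ¬ s x).card = c := by
    rw [Finset.card_filter_add_card_filter_not]
    simp [Finset.card_univ, ZMod.card]
  have hsplit2 : ((Finset.univ.filter fun x => ¬ s x).filter fun x => s (x+1)).card
      + ((Finset.univ.filter fun x => ¬ s x).filter fun x => ¬ s (x+1)).card
      = (Finset.univ.filter fun x => ¬ s x).card := by
    rw [Finset.card_filter_add_card_filter_not]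
  have hMN1 : ((Finset.univ.filter fun x => ¬ s x).filter fun x => s (x+1))
      = Finset.univ.filter fun x => ¬ s x ∧ s (x+1) := by
    rw [Finset.filter_filter]
  have hMN2 : ((Finset.univ.filter fun x => ¬ s x).filter fun x => ¬ s (x+1))
      = Finset.univ.filter fun x => ¬ s x ∧ ¬ s (x+1) := by
    rw [Finset.filter_filter]
  -- M ↔ Q bijection
  have hMQ : (Finset.univ.filter fun x => ¬ s x ∧ s (x+1)).card
      = (Finset.univ.filter fun x => s x ∧ ¬ s (x - 1)).card := by
    apply Finset.card_bij (fun x _ => x + 1)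
    · intro a ha; simp only [mem_filter, mem_univ, true_and] at ha ⊢
      constructor
      · exact ha.2
      · simpa [add_sub_cancel_right] using ha.1
    · intro a _ b _ h; exact add_right_cancel h
    · intro b hb
      refine ⟨b - 1, ?_, by ring⟩
      simp only [mem_filter, mem_univ, true_and, sub_add_cancel] at hb ⊢
      exact ⟨hb.2, hb.1⟩
  -- p covered by three classes
  have hcover : (Finset.univ.filter p) ⊆
      ((Finset.univ.filter fun x => p x ∧ s x) ∪ (Finset.univ.filter fun x => p x ∧ s (x+1)))
        ∪ (Finset.univ.filter fun x => ¬ s x ∧ ¬ s (x+1)) := by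
    intro x hx
    simp only [mem_filter, mem_univ, true_and] at hx
    simp only [Finset.mem_union, mem_filter, mem_univ, true_and]
    by_cases hs : s x
    · exact Or.inl (Or.inl ⟨hx, hs⟩)
    · by_cases hs' : s (x+1)
      · exact Or.inl (Or.inr ⟨hx, hs'⟩)
      · exact Or.inr ⟨hs, hs'⟩
  have hcard := Finset.card_le_card hcover
  have h3 := Finset.card_union_le
    ((Finset.univ.filter fun x => p x ∧ s x) ∪ (Finset.univ.filter fun x => p x ∧ s (x+1)))
    (Finset.univ.filter fun x => ¬ s x ∧ ¬ s (x+1))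
  have h4 := Finset.card_union_le (Finset.univ.filter fun x => p x ∧ s x)
    (Finset.univ.filter fun x => p x ∧ s (x+1))
  rw [hMN1] at hsplit2
  rw [hMN2] at hsplit2
  omega


variable {α : Type*} [DecidableEq α]

/-- The reversed Berge cycle. -/
def bcRev {H : BHypergraph α} {c : ℕ} (C : BergeCycle H c) : BergeCycle H c where
  hc := C.hc
  v := fun i => C.v (-i)
  e := fun i => C.e (-i - 1)
  v_inj := fun a b h => neg_injective (C.v_inj h)
  e_inj := fun a b h => by
    have h2 := C.e_inj h
    have : (-a : ZMod c) = -b := by linear_combination h2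
    exact neg_injective this
  e_mem := fun i => C.e_mem _
  mem_self := fun i => by
    have := C.mem_succ (-i - 1)
    simpa [sub_add_cancel] using this
  mem_succ := fun i => by
    show C.v (-(i + 1)) ∈ C.e (-i - 1)
    have h : (-(i + 1) : ZMod c) = -i - 1 := by ring
    rw [h]
    exact C.mem_self _

lemma bcRev_vset {H : BHypergraph α} {c : ℕ} [NeZero c] (C : BergeCycle H c) :
    (bcRev C).vset = C.vset := by
  unfold BergeCycle.vset
  ext a
  simp only [Finset.mem_image, Finset.mem_univ, true_and, bcRev]
  constructor
  · rintro ⟨i, rfl⟩; exact ⟨-i, rfl⟩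
  · rintro ⟨i, rfl⟩; exact ⟨-i, by simp⟩

lemma bcRev_eset {H : BHypergraph α} {c : ℕ} [NeZero c] (C : BergeCycle H c) :
    (bcRev C).eset = C.eset := by
  unfold BergeCycle.eset
  ext a
  simp only [Finset.mem_image, Finset.mem_univ, true_and, bcRev]
  constructor
  · rintro ⟨i, rfl⟩; exact ⟨-i - 1, rfl⟩
  · rintro ⟨i, rfl⟩; exact ⟨-i - 1, by ring_nf⟩

/-- Key construction: from two distinct edges of `C` containing `u` and a Berge path
between the corresponding defining vertices avoiding `C`, build a longer Berge cycle. -/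
lemma cycle_extend {H : BHypergraph α} {c : ℕ} [NeZero c] (C : BergeCycle H c)
    (u : α) (huC : u ∉ C.vset) {x y : ZMod c} (hxy : x ≠ y)
    (hux : u ∈ C.e x) (huy : u ∈ C.e y)
    {ℓ : ℕ} (R : BergePath H ℓ)
    (hR0 : R.u 0 = C.v x) (hRl : R.u (Fin.last ℓ) = C.v y)
    (hint : ∀ t : Fin (ℓ + 1), t ≠ 0 → t ≠ Fin.last ℓ → R.u t ∉ C.vset ∧ R.u t ≠ u)
    (hRe : ∀ t : Fin ℓ, R.f t ∉ C.eset) :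
    H.HasBergeCycle (c + ℓ) := by
  have hc2 : 2 ≤ c := C.hc
  have hl1 : 1 ≤ ℓ := by
    rcases Nat.eq_zero_or_pos ℓ with h | h
    · subst h; exact absurd (C.v_inj (hR0 ▸ hRl ▸ rfl)) hxy
    · exact h
  set d := (x - y).val with hd
  have hdc : d < c := ZMod.val_lt _
  have hd1 : 1 ≤ d := by
    rcases Nat.eq_zero_or_pos d with h | h
    · exfalso
      apply hxy
      have h0 : x - y = 0 := (ZMod.val_eq_zero _).mp (by omega)
      exact sub_eq_zero.mp h0
    · exact h
  have hdx : ((d : ℕ) : ZMod c) = x - y := by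
    rw [hd]; exact (ZMod.natCast_val _).trans (ZMod.cast_id _ _)
  have hx' : y + ((d : ℕ) : ZMod c) = x := by rw [hdx]; ring
  set m := c + ℓ with hm
  haveI : NeZero m := ⟨by omega⟩
  have hvset : ∀ z : ZMod c, C.v z ∈ C.vset := by
    intro z; unfold BergeCycle.vset; exact Finset.mem_image_of_mem _ (Finset.mem_univ z)
  have heset : ∀ z : ZMod c, C.e z ∈ C.eset := by
    intro z; unfold BergeCycle.eset; exact Finset.mem_image_of_mem _ (Finset.mem_univ z)
  have hRint : ∀ (j : ℕ) (hj : j < ℓ + 1), 1 ≤ j → j ≤ ℓ - 1 →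
      R.u ⟨j, hj⟩ ∉ C.vset ∧ R.u ⟨j, hj⟩ ≠ u := by
    intro j hj h1 h2
    refine hint ⟨j, hj⟩ ?_ ?_
    · intro h; have := congrArg Fin.val h; simp at this; omega
    · intro h; have := congrArg Fin.val h; simp [Fin.last] at this; omega
  set F : ℕ → α := fun k =>
    if k = 0 then u
    else if k ≤ d then C.v (y + (k : ZMod c))
    else if h : k < d + ℓ then R.u ⟨k - d, by omega⟩
    else C.v (y + ((d + ℓ : ℕ) : ZMod c) - (k : ZMod c)) with hF
  set G : ℕ → Finset α := fun k =>
    if h0 : k = 0 then C.e y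
    else if h : k < d then C.e (y + (k : ZMod c))
    else if h2 : k < d + ℓ then R.f ⟨k - d, by omega⟩
    else C.e (y + ((d + ℓ : ℕ) : ZMod c) - (k : ZMod c) - 1) with hG
  -- characterizations
  have hF0 : F 0 = u := by unfold F; beta_reduce; rw [if_pos rfl]
  have hFA : ∀ k : ℕ, k ≠ 0 → k ≤ d → F k = C.v (y + (k : ZMod c)) := by
    intro k h1 h2; unfold F; beta_reduce; rw [if_neg h1, if_pos h2]
  have hFP : ∀ (k : ℕ) (h1 : d < k) (h2 : k < d + ℓ), F k = R.u ⟨k - d, by omega⟩ := by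
    intro k h1 h2; unfold F; beta_reduce
    rw [if_neg (by omega), if_neg (by omega), dif_pos h2]
  have hFD : ∀ k : ℕ, d + ℓ ≤ k → F k = C.v (y + ((d + ℓ : ℕ) : ZMod c) - (k : ZMod c)) := by
    intro k h1; unfold F; beta_reduce
    rw [if_neg (by omega), if_neg (by omega), dif_neg (by omega)]
  have hFR : ∀ (k : ℕ) (h1 : d ≤ k) (h2 : k ≤ d + ℓ), F k = R.u ⟨k - d, by omega⟩ := by
    intro k h1 h2
    rcases (show k = d ∨ (d < k ∧ k < d + ℓ) ∨ k = d + ℓ from by omega) with h | h | h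
    · subst h
      rw [hFA d (by omega) le_rfl, hx', ← hR0]
      congr 1
      have : d - d = 0 := by omega
      simp [Fin.ext_iff, this]
    · exact hFP k h.1 h.2
    · subst h
      rw [hFD _ le_rfl]
      have hy : y + ((d + ℓ : ℕ) : ZMod c) - ((d + ℓ : ℕ) : ZMod c) = y := by ring
      rw [hy, ← hRl]
      congr 1
      simp [Fin.ext_iff, Fin.last]
  have hGA : ∀ k : ℕ, k < d → G k = C.e (y + (k : ZMod c)) := by
    intro k h2
    rcases Nat.eq_zero_or_pos k with h | h
    · subst h; unfold G; beta_reduce; rw [dif_pos rfl]; norm_num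
    · unfold G; beta_reduce; rw [dif_neg (by omega), dif_pos h2]
  have hGP : ∀ (k : ℕ) (h1 : d ≤ k) (h2 : k < d + ℓ), G k = R.f ⟨k - d, by omega⟩ := by
    intro k h1 h2; unfold G; beta_reduce
    rw [dif_neg (by omega), dif_neg (by omega), dif_pos h2]
  have hGD : ∀ k : ℕ, d + ℓ ≤ k →
      G k = C.e (y + ((d + ℓ : ℕ) : ZMod c) - (k : ZMod c) - 1) := by
    intro k h1; unfold G; beta_reduce
    rw [dif_neg (by omega), dif_neg (by omega), dif_neg (by omega)]
  -- identities for the last position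
  have e2 : ((m - 1 : ℕ) : ZMod c) = ((ℓ - 1 : ℕ) : ZMod c) := by
    have h : (m - 1 : ℕ) = c + (ℓ - 1) := by omega
    rw [h, Nat.cast_add, ZMod.natCast_self, zero_add]
  have e1 : ((d + ℓ : ℕ) : ZMod c) = ((d : ℕ) : ZMod c) + ((ℓ - 1 : ℕ) : ZMod c) + 1 := by
    have h : (d + ℓ : ℕ) = d + (ℓ - 1) + 1 := by omega
    rw [h]; push_cast; ring
  have hgx : y + ((d + ℓ : ℕ) : ZMod c) - ((m - 1 : ℕ) : ZMod c) - 1 = x := by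
    rw [e1, e2, hdx]; ring
  have hgx1 : y + ((d + ℓ : ℕ) : ZMod c) - ((m - 1 : ℕ) : ZMod c) = x + 1 := by
    rw [e1, e2, hdx]; ring
  -- injectivity of F on [0, m)
  have hcastDD : ∀ k1 k2 : ℕ, d + ℓ ≤ k1 → k1 < m → d + ℓ ≤ k2 → k2 < m →
      (k1 : ZMod c) = (k2 : ZMod c) → k1 = k2 := by
    intro k1 k2 ha1 hb1 ha2 hb2 h
    have r1 : (k1 : ZMod c) = ((d + ℓ : ℕ) : ZMod c) + ((k1 - (d + ℓ) : ℕ) : ZMod c) := by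
      rw [← Nat.cast_add]; congr 1; omega
    have r2 : (k2 : ZMod c) = ((d + ℓ : ℕ) : ZMod c) + ((k2 - (d + ℓ) : ℕ) : ZMod c) := by
      rw [← Nat.cast_add]; congr 1; omega
    rw [r1, r2] at h
    have := S19.zmod_cast_inj (a := k1 - (d + ℓ)) (b := k2 - (d + ℓ))
      (by omega) (by omega) (add_left_cancel h)
    omega
  have hcastAD : ∀ k1 k2 : ℕ, 1 ≤ k1 + k2 - (d + ℓ) → k1 + k2 - (d + ℓ) < c →
      (k1 : ZMod c) + (k2 : ZMod c) = ((d + ℓ : ℕ) : ZMod c) → False := by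
    intro k1 k2 ha hb h
    have r1 : ((k1 + k2 : ℕ) : ZMod c)
        = ((d + ℓ : ℕ) : ZMod c) + ((k1 + k2 - (d + ℓ) : ℕ) : ZMod c) := by
      rw [← Nat.cast_add]; congr 1; omega
    have r2 : ((k1 + k2 : ℕ) : ZMod c) = (k1 : ZMod c) + (k2 : ZMod c) := by push_cast; ring
    rw [r2, h] at r1
    have h0 : ((k1 + k2 - (d + ℓ) : ℕ) : ZMod c) = ((0 : ℕ) : ZMod c) := by
      have := r1.symm
      rw [Nat.cast_zero]
      linear_combination this
    have := S19.zmod_cast_inj (a := k1 + k2 - (d + ℓ)) (b := 0) (by omega) (by omega) h0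
    omega
  have hFinj : ∀ k1 k2 : ℕ, k1 < m → k2 < m → F k1 = F k2 → k1 = k2 := by
    have main : ∀ k1 k2 : ℕ, k1 < m → k2 < m → k1 ≠ 0 → k2 ≠ 0 → F k1 = F k2 → k1 = k2 := by
      intro k1 k2 hk1 hk2 h10 h20 heq
      rcases (show k1 ≤ d ∨ (d < k1 ∧ k1 < d + ℓ) ∨ d + ℓ ≤ k1 from by omega) with hr1 | hr1 | hr1 <;>
        rcases (show k2 ≤ d ∨ (d < k2 ∧ k2 < d + ℓ) ∨ d + ℓ ≤ k2 from by omega) with hr2 | hr2 | hr2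
      · -- A A
        rw [hFA k1 h10 hr1, hFA k2 h20 hr2] at heq
        have := add_left_cancel (C.v_inj heq)
        have := S19.zmod_cast_inj (a := k1) (b := k2) (by omega) (by omega) this
        omega
      · -- A P
        exfalso
        rw [hFA k1 h10 hr1, hFP k2 hr2.1 hr2.2] at heq
        have hmem := hvset (y + (k1 : ZMod c))
        rw [heq] at hmem
        exact (hRint (k2 - d) (by omega) (by omega) (by omega)).1 hmem
      · -- A D
        exfalso
        rw [hFA k1 h10 hr1, hFD k2 hr2] at heq
        have h3 : (k1 : ZMod c) + (k2 : ZMod c) = ((d + ℓ : ℕ) : ZMod c) := by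
          have := C.v_inj heq
          linear_combination this
        exact hcastAD k1 k2 (by omega) (by omega) h3
      · -- P A
        exfalso
        rw [hFP k1 hr1.1 hr1.2, hFA k2 h20 hr2] at heq
        have hmem := hvset (y + (k2 : ZMod c))
        rw [← heq] at hmem
        exact (hRint (k1 - d) (by omega) (by omega) (by omega)).1 hmem
      · -- P P
        rw [hFP k1 hr1.1 hr1.2, hFP k2 hr2.1 hr2.2] at heq
        have := R.u_inj heq
        have := congrArg Fin.val this
        simp at this
        omega
      · -- P D
        exfalso
        rw [hFP k1 hr1.1 hr1.2, hFD k2 hr2] at heq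
        have hmem := hvset (y + ((d + ℓ : ℕ) : ZMod c) - (k2 : ZMod c))
        rw [← heq] at hmem
        exact (hRint (k1 - d) (by omega) (by omega) (by omega)).1 hmem
      · -- D A
        exfalso
        rw [hFD k1 hr1, hFA k2 h20 hr2] at heq
        have h3 : (k2 : ZMod c) + (k1 : ZMod c) = ((d + ℓ : ℕ) : ZMod c) := by
          have := C.v_inj heq
          linear_combination -this
        exact hcastAD k2 k1 (by omega) (by omega) h3
      · -- D P
        exfalso
        rw [hFD k1 hr1, hFP k2 hr2.1 hr2.2] at heq
        have hmem := hvset (y + ((d + ℓ : ℕ) : ZMod c) - (k1 : ZMod c))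
        rw [heq] at hmem
        exact (hRint (k2 - d) (by omega) (by omega) (by omega)).1 hmem
      · -- D D
        rw [hFD k1 hr1, hFD k2 hr2] at heq
        have h3 := C.v_inj heq
        have h4 : (k1 : ZMod c) = (k2 : ZMod c) := by linear_combination -h3
        exact hcastDD k1 k2 hr1 hk1 hr2 hk2 h4
    intro k1 k2 hk1 hk2 heq
    rcases Nat.eq_zero_or_pos k1 with h10 | h10 <;> rcases Nat.eq_zero_or_pos k2 with h20 | h20
    · omega
    · exfalso
      subst h10
      rw [hF0] at heq
      rcases (show k2 ≤ d ∨ (d < k2 ∧ k2 < d + ℓ) ∨ d + ℓ ≤ k2 from by omega) with hr | hr | hr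
      · rw [hFA k2 (by omega) hr] at heq
        exact huC (by rw [heq]; exact hvset _)
      · rw [hFP k2 hr.1 hr.2] at heq
        exact (hRint (k2 - d) (by omega) (by omega) (by omega)).2 heq.symm
      · rw [hFD k2 hr] at heq
        exact huC (by rw [heq]; exact hvset _)
    · exfalso
      subst h20
      rw [hF0] at heq
      rcases (show k1 ≤ d ∨ (d < k1 ∧ k1 < d + ℓ) ∨ d + ℓ ≤ k1 from by omega) with hr | hr | hr
      · rw [hFA k1 (by omega) hr] at heq
        exact huC (by rw [← heq]; exact hvset _)
      · rw [hFP k1 hr.1 hr.2] at heq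
        exact (hRint (k1 - d) (by omega) (by omega) (by omega)).2 heq
      · rw [hFD k1 hr] at heq
        exact huC (by rw [← heq]; exact hvset _)
    · exact main k1 k2 hk1 hk2 (by omega) (by omega) heq
  -- injectivity of G on [0, m)
  have hGinj : ∀ k1 k2 : ℕ, k1 < m → k2 < m → G k1 = G k2 → k1 = k2 := by
    intro k1 k2 hk1 hk2 heq
    rcases (show k1 < d ∨ (d ≤ k1 ∧ k1 < d + ℓ) ∨ d + ℓ ≤ k1 from by omega) with hr1 | hr1 | hr1 <;>
      rcases (show k2 < d ∨ (d ≤ k2 ∧ k2 < d + ℓ) ∨ d + ℓ ≤ k2 from by omega) with hr2 | hr2 | hr2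
    · rw [hGA k1 hr1, hGA k2 hr2] at heq
      have := add_left_cancel (C.e_inj heq)
      have := S19.zmod_cast_inj (a := k1) (b := k2) (by omega) (by omega) this
      omega
    · exfalso
      rw [hGA k1 hr1, hGP k2 hr2.1 hr2.2] at heq
      have hmem := heset (y + (k1 : ZMod c))
      rw [heq] at hmem
      exact hRe _ hmem
    · exfalso
      rw [hGA k1 hr1, hGD k2 hr2] at heq
      have h3 : (k1 : ZMod c) + ((k2 + 1 : ℕ) : ZMod c) = ((d + ℓ : ℕ) : ZMod c) := by
        have := C.e_inj heq
        push_cast at this ⊢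
        linear_combination this
      exact hcastAD k1 (k2 + 1) (by omega) (by omega) h3
    · exfalso
      rw [hGP k1 hr1.1 hr1.2, hGA k2 hr2] at heq
      have hmem := heset (y + (k2 : ZMod c))
      rw [← heq] at hmem
      exact hRe _ hmem
    · rw [hGP k1 hr1.1 hr1.2, hGP k2 hr2.1 hr2.2] at heq
      have := R.f_inj heq
      have := congrArg Fin.val this
      simp at this
      omega
    · exfalso
      rw [hGP k1 hr1.1 hr1.2, hGD k2 hr2] at heq
      have hmem := heset (y + ((d + ℓ : ℕ) : ZMod c) - (k2 : ZMod c) - 1)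
      rw [← heq] at hmem
      exact hRe _ hmem
    · exfalso
      rw [hGD k1 hr1, hGA k2 hr2] at heq
      have h3 : (k2 : ZMod c) + ((k1 + 1 : ℕ) : ZMod c) = ((d + ℓ : ℕ) : ZMod c) := by
        have := C.e_inj heq
        push_cast at this ⊢
        linear_combination -this
      exact hcastAD k2 (k1 + 1) (by omega) (by omega) h3
    · exfalso
      rw [hGD k1 hr1, hGP k2 hr2.1 hr2.2] at heq
      have hmem := heset (y + ((d + ℓ : ℕ) : ZMod c) - (k1 : ZMod c) - 1)
      rw [heq] at hmem
      exact hRe _ hmem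
    · rw [hGD k1 hr1, hGD k2 hr2] at heq
      have h3 := C.e_inj heq
      have h4 : (k1 : ZMod c) = (k2 : ZMod c) := by linear_combination -h3
      exact hcastDD k1 k2 hr1 hk1 hr2 hk2 h4
  -- membership facts
  have mem1 : ∀ k : ℕ, k < m → F k ∈ G k := by
    intro k hk
    rcases (show k < d ∨ (d ≤ k ∧ k < d + ℓ) ∨ d + ℓ ≤ k from by omega) with hr | hr | hr
    · rcases Nat.eq_zero_or_pos k with h0 | h0
      · subst h0; rw [hF0, hGA 0 (by omega)]
        norm_num
        exact huy
      · rw [hFA k (by omega) (by omega), hGA k hr]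
        exact C.mem_self _
    · rw [hFR k hr.1 (by omega), hGP k hr.1 hr.2]
      exact R.mem_cast ⟨k - d, by omega⟩
    · rw [hFD k hr, hGD k hr]
      have hms := C.mem_succ (y + ((d + ℓ : ℕ) : ZMod c) - (k : ZMod c) - 1)
      have h : y + ((d + ℓ : ℕ) : ZMod c) - (k : ZMod c) - 1 + 1
          = y + ((d + ℓ : ℕ) : ZMod c) - (k : ZMod c) := by ring
      rw [h] at hms
      exact hms
  have mem2 : ∀ k : ℕ, k < m → F ((k + 1) % m) ∈ G k := by
    intro k hk
    rcases (show k = m - 1 ∨ k < m - 1 from by omega) with hlast | hlt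
    · subst hlast
      have hmod : (m - 1 + 1) % m = 0 := by
        have : m - 1 + 1 = m := by omega
        rw [this, Nat.mod_self]
      rw [hmod, hF0, hGD (m - 1) (by omega), hgx]
      exact hux
    · have hmod : (k + 1) % m = k + 1 := Nat.mod_eq_of_lt (by omega)
      rw [hmod]
      rcases (show k < d ∨ (d ≤ k ∧ k < d + ℓ) ∨ d + ℓ ≤ k from by omega) with hr | hr | hr
      · rw [hFA (k + 1) (by omega) (by omega), hGA k hr]
        have h : (((k + 1 : ℕ)) : ZMod c) = (k : ZMod c) + 1 := by push_cast; ring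
        rw [h, ← add_assoc]
        exact C.mem_succ _
      · rw [hFR (k + 1) (by omega) (by omega), hGP k hr.1 hr.2]
        have h : k + 1 - d = (k - d) + 1 := by omega
        simp only [h]
        exact R.mem_succ ⟨k - d, by omega⟩
      · rw [hFD (k + 1) (by omega), hGD k hr]
        have h : y + ((d + ℓ : ℕ) : ZMod c) - (((k + 1 : ℕ)) : ZMod c)
            = y + ((d + ℓ : ℕ) : ZMod c) - (k : ZMod c) - 1 := by push_cast; ring
        rw [h]
        exact C.mem_self _
  have hsucc : ∀ i : ZMod m, (i + 1).val = (i.val + 1) % m := by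
    intro i
    rw [ZMod.val_add]
    congr 1
    have h1 : ((1 : ℕ) : ZMod m).val = 1 := ZMod.val_cast_of_lt (by omega)
    simpa using h1
  refine ⟨by omega, fun i => F i.val, fun i => G i.val, ?_, ?_, ?_, ?_, ?_⟩
  · intro i j h
    exact ZMod.val_injective m (hFinj i.val j.val (ZMod.val_lt i) (ZMod.val_lt j) h)
  · intro i j h
    exact ZMod.val_injective m (hGinj i.val j.val (ZMod.val_lt i) (ZMod.val_lt j) h)
  · intro i
    show G i.val ∈ H.edges
    rcases (show i.val < d ∨ (d ≤ i.val ∧ i.val < d + ℓ) ∨ d + ℓ ≤ i.val from by omega) with hr | hr | hr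
    · rw [hGA i.val hr]; exact C.e_mem _
    · rw [hGP i.val hr.1 hr.2]; exact R.f_mem _
    · rw [hGD i.val hr]; exact C.e_mem _
  · intro i
    exact mem1 i.val (ZMod.val_lt i)
  · intro i
    show F (i + 1).val ∈ G i.val
    rw [hsucc i]
    exact mem2 i.val (ZMod.val_lt i)

lemma no_pair {H : BHypergraph α} {c : ℕ} [NeZero c] (C : BergeCycle H c)
    (hmax : ∀ m, H.HasBergeCycle m → m ≤ c)
    (u : α) (huC : u ∉ C.vset) (W : Finset α) (hW : IsExpanding C u W)
    {x y : ZMod c} (hxy : x ≠ y)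
    (hux : u ∈ C.e x) (huy : u ∈ C.e y) (hvx : C.v x ∈ W) (hvy : C.v y ∈ W) : False := by
  obtain ⟨ℓ, R, hR0, hRl, hint, hRe⟩ :=
    hW.2 _ hvx _ hvy (fun h => hxy (C.v_inj h))
  have hle := hmax _ (cycle_extend C u huC hxy hux huy R hR0 hRl hint hRe)
  have hl0 : ℓ = 0 := by omega
  subst hl0
  exact hxy (C.v_inj (hR0 ▸ hRl ▸ rfl))

lemma no_pair_succ {H : BHypergraph α} {c : ℕ} [NeZero c] (C : BergeCycle H c)
    (hmax : ∀ m, H.HasBergeCycle m → m ≤ c)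
    (u : α) (huC : u ∉ C.vset) (W : Finset α) (hW : IsExpanding C u W)
    {x y : ZMod c} (hxy : x ≠ y)
    (hux : u ∈ C.e x) (huy : u ∈ C.e y) (hvx : C.v (x + 1) ∈ W) (hvy : C.v (y + 1) ∈ W) :
    False := by
  have huC' : u ∉ (bcRev C).vset := by rwa [bcRev_vset]
  have hW' : IsExpanding (bcRev C) u W := by
    unfold IsExpanding
    rw [bcRev_vset, bcRev_eset]
    exact hW
  refine no_pair (bcRev C) hmax u huC' W hW' (x := -x - 1) (y := -y - 1) ?_ ?_ ?_ ?_ ?_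
  · intro h
    apply hxy
    have : (-x : ZMod c) = -y := by linear_combination h
    exact neg_injective this
  · show u ∈ C.e (-(-x - 1) - 1)
    simpa [neg_sub, sub_add_cancel] using hux
  · show u ∈ C.e (-(-y - 1) - 1)
    simpa [neg_sub, sub_add_cancel] using huy
  · show C.v (-(-x - 1)) ∈ W
    have h : (-(-x - 1) : ZMod c) = x + 1 := by ring
    rw [h]; exact hvx
  · show C.v (-(-y - 1)) ∈ W
    have h : (-(-y - 1) : ZMod c) = y + 1 := by ring
    rw [h]; exact hvy

lemma card_le_one_of_no_pair {c : ℕ} [NeZero c] (P : ZMod c → Prop) [DecidablePred P]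
    (h : ∀ x y : ZMod c, x ≠ y → P x → P y → False) :
    (Finset.univ.filter P).card ≤ 1 := by
  by_contra hc
  push_neg at hc
  obtain ⟨a, ha, b, hb, hab⟩ := Finset.one_lt_card.mp hc
  simp only [Finset.mem_filter, Finset.mem_univ, true_and] at ha hb
  exact h a b hab ha hb

lemma card_W_eq {H : BHypergraph α} {c : ℕ} [NeZero c] (C : BergeCycle H c)
    (W : Finset α) (hW : W ⊆ C.vset) :
    W.card = (Finset.univ.filter fun j : ZMod c => C.v j ∈ W).card := by
  have himg : W = (Finset.univ.filter fun j : ZMod c => C.v j ∈ W).image C.v := by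
    ext w
    simp only [Finset.mem_image, Finset.mem_filter, Finset.mem_univ, true_and]
    constructor
    · intro hw
      have := hW hw
      unfold BergeCycle.vset at this
      simp only [Finset.mem_image, Finset.mem_univ, true_and] at this
      obtain ⟨j, hj⟩ := this
      exact ⟨j, by rwa [hj], hj⟩
    · rintro ⟨j, hj, rfl⟩; exact hj
  conv_lhs => rw [himg]
  rw [Finset.card_image_of_injective _ C.v_inj]

end S19

/-- Claim `no3`. Let `C = v_1, e_1, …, v_c, e_c, v_1` be a longest
Berge cycle in an `r`-uniform hypergraph `H`, `u ∈ V(H) − V(C)`,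
`B = {e_j ∈ E(C) : u ∈ e_j}` with `b = |B|`, and `W` a `(u,C)`-expanding set. Then:
(i) if the edges of `B` form exactly `q` maximal runs of consecutive edges along the
cyclic order of `C` (the number of runs being the number of `j` with `e_j ∈ B` and
`e_{j−1} ∉ B`), then `|W| ≤ c − (b + q) + 2`, i.e. `|W| + b + q ≤ c + 2`;
(ii) if the vertices of `W` form exactly `q'` maximal runs of consecutive vertices
along the cyclic order of `C`, then `b ≤ c − (|W| + q') + 2`, i.e.
`b + |W| + q' ≤ c + 2`. -/
theorem statement19 {α : Type*} [DecidableEq α] (r c : ℕ) [NeZero c]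
    (H : BHypergraph α) (hunif : H.Uniform r)
    (C : BergeCycle H c) (hmax : ∀ m, H.HasBergeCycle m → m ≤ c)
    (u : α) (huV : u ∈ H.verts) (huC : u ∉ C.vset)
    (W : Finset α) (hW : IsExpanding C u W) :
    (∀ q : ℕ,
      q = ((Finset.univ : Finset (ZMod c)).filter
            (fun j => u ∈ C.e j ∧ u ∉ C.e (j - 1))).card →
      W.card + ((Finset.univ : Finset (ZMod c)).filter (fun j => u ∈ C.e j)).card + q
        ≤ c + 2) ∧
    (∀ q' : ℕ,
      q' = ((Finset.univ : Finset (ZMod c)).filter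
            (fun j => C.v j ∈ W ∧ C.v (j - 1) ∉ W)).card →
      ((Finset.univ : Finset (ZMod c)).filter (fun j => u ∈ C.e j)).card + W.card + q'
        ≤ c + 2) := by
  classical
  have h1 : (Finset.univ.filter fun j : ZMod c => u ∈ C.e j ∧ C.v j ∈ W).card ≤ 1 := by
    apply S19.card_le_one_of_no_pair
    intro a b hab ha hb
    exact S19.no_pair C hmax u huC W hW hab ha.1 hb.1 ha.2 hb.2
  have h2 : (Finset.univ.filter fun j : ZMod c => u ∈ C.e j ∧ C.v (j + 1) ∈ W).card ≤ 1 := by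
    apply S19.card_le_one_of_no_pair
    intro a b hab ha hb
    exact S19.no_pair_succ C hmax u huC W hW hab ha.1 hb.1 ha.2 hb.2
  have hWcard := S19.card_W_eq C W hW.1
  constructor
  · -- claim (i)
    intro q hq
    subst hq
    have key := S19.count_lemma (c := c) (fun x => C.v (x + 1) ∈ W) (fun x => u ∈ C.e x)
      ?_ ?_
    · have hs : (Finset.univ.filter fun x : ZMod c => C.v (x + 1) ∈ W).card
          = (Finset.univ.filter fun x : ZMod c => C.v x ∈ W).card :=
        S19.shift_card (fun x => C.v x ∈ W)
      omega
    · have : (Finset.univ.filter fun x : ZMod c => C.v (x + 1) ∈ W ∧ u ∈ C.e x)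
          = (Finset.univ.filter fun x : ZMod c => u ∈ C.e x ∧ C.v (x + 1) ∈ W) := by
        apply Finset.filter_congr
        intro x _
        exact and_comm
      rw [this]
      exact h2
    · have heq : (Finset.univ.filter fun x : ZMod c => C.v (x + 1) ∈ W ∧ u ∈ C.e (x + 1)).card
          = (Finset.univ.filter fun x : ZMod c => C.v x ∈ W ∧ u ∈ C.e x).card :=
        S19.shift_card (fun x => C.v x ∈ W ∧ u ∈ C.e x)
      rw [heq]
      have : (Finset.univ.filter fun x : ZMod c => C.v x ∈ W ∧ u ∈ C.e x)
          = (Finset.univ.filter fun x : ZMod c => u ∈ C.e x ∧ C.v x ∈ W) := by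
        apply Finset.filter_congr
        intro x _
        exact and_comm
      rw [this]
      exact h1
  · -- claim (ii)
    intro q' hq'
    subst hq'
    have key := S19.count_lemma (c := c) (fun x => u ∈ C.e x) (fun x => C.v x ∈ W) h1 h2
    beta_reduce at key
    omega
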